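/- Glaeser's inequality: if u : ℝ → [0,∞) is twice differentiable with bounded second derivative, then for every t ∈ ℝ, u'(t)² ≤ 2 u(t) · sup_{s∈ℝ} |u''(s)|. -/

import Mathlib

/-- Glaeser's inequality: if `u : ℝ → [0,∞)` is twice differentiable with
bounded second derivative, then `u'(t)² ≤ 2 u(t) · sup_s |u''(s)|` for every `t`. -/
theorem stmt4 (u u' u'' : ℝ → ℝ)
    (hu : ∀ t, 0 ≤ u t)
    (hd1 : ∀ t, HasDerivAt u (u' t) t)
    (hd2 : ∀ t, HasDerivAt u' (u'' t) t)
    (hbdd : BddAbove (Set.range fun s => |u'' s|)) (t : ℝ) :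
    u' t ^ 2 ≤ 2 * u t * ⨆ s, |u'' s| := by
  set M : ℝ := ⨆ s, |u'' s| with hMdef
  have hM : ∀ s, |u'' s| ≤ M := fun s => le_ciSup hbdd s
  have hM0 : 0 ≤ M := le_trans (abs_nonneg _) (hM 0)
  set w : ℝ → ℝ := fun h => u t + u' t * h + M * h ^ 2 / 2 - u (t + h) with hw
  set w1 : ℝ → ℝ := fun h => u' t + M * h - u' (t + h) with hw1def
  have hw1 : ∀ h, HasDerivAt w (w1 h) h := by
    intro h
    have h1 : HasDerivAt (fun h : ℝ => u (t + h)) (u' (t + h)) h := by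
      have := (hd1 (t + h)).comp h ((hasDerivAt_id h).const_add t)
      exact this.congr_deriv (by simp)
    have h2 : HasDerivAt (fun h : ℝ => u t + u' t * h + M * h ^ 2 / 2)
        (u' t + M * h) h := by
      have ha : HasDerivAt (fun h : ℝ => u' t * h) (u' t) h := by
        simpa using (hasDerivAt_id h).const_mul (u' t)
      have hb : HasDerivAt (fun h : ℝ => M * h ^ 2 / 2) (M * h) h := by
        have := ((hasDerivAt_pow 2 h).const_mul M).div_const 2
        exact this.congr_deriv (by ring)
      exact ((ha.const_add (u t)).add hb)
    exact h2.sub h1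
  have hw2 : ∀ h, HasDerivAt w1 (M - u'' (t + h)) h := by
    intro h
    have h1 : HasDerivAt (fun h : ℝ => u' (t + h)) (u'' (t + h)) h := by
      have := (hd2 (t + h)).comp h ((hasDerivAt_id h).const_add t)
      exact this.congr_deriv (by simp)
    have h2 : HasDerivAt (fun h : ℝ => u' t + M * h) M h := by
      simpa using ((hasDerivAt_id h).const_mul M).const_add (u' t)
    exact h2.sub h1
  have hmono : Monotone w1 := by
    apply monotone_of_deriv_nonneg
    · exact fun h => (hw2 h).differentiableAt
    · intro h
      rw [(hw2 h).deriv]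
      have : u'' (t + h) ≤ |u'' (t + h)| := le_abs_self _
      linarith [hM (t + h)]
  have hw1_0 : w1 0 = 0 := by simp [hw1def]
  have hw0 : w 0 = 0 := by simp [hw]
  have hwd : Differentiable ℝ w := fun h => (hw1 h).differentiableAt
  have hwnn : ∀ h, 0 ≤ w h := by
    intro h
    rcases le_or_gt 0 h with hh | hh
    · have hmonoW : MonotoneOn w (Set.Ici (0 : ℝ)) := by
        apply monotoneOn_of_deriv_nonneg (convex_Ici 0) hwd.continuous.continuousOn
          (hwd.differentiableOn.mono interior_subset)
        intro x hx
        rw [(hw1 x).deriv, ← hw1_0]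
        exact hmono (le_of_lt (by simpa using hx))
      have := hmonoW (Set.self_mem_Ici) (Set.mem_Ici.mpr hh) hh
      linarith [hw0 ▸ this]
    · have hantiW : AntitoneOn w (Set.Iic (0 : ℝ)) := by
        apply antitoneOn_of_deriv_nonpos (convex_Iic 0) hwd.continuous.continuousOn
          (hwd.differentiableOn.mono interior_subset)
        intro x hx
        rw [(hw1 x).deriv, ← hw1_0]
        exact hmono (le_of_lt (by simpa using hx))
      have := hantiW (Set.mem_Iic.mpr hh.le) (Set.self_mem_Iic) hh.le
      linarith [hw0 ▸ this]
  have key : ∀ h : ℝ, 0 ≤ u t + u' t * h + M * h ^ 2 / 2 := by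
    intro h
    have := hwnn h
    have := hu (t + h)
    simp only [hw] at *
    linarith
  rcases eq_or_lt_of_le hM0 with hM0' | hMpos
  · have hu'0 : u' t = 0 := by
      by_contra hne
      have h1 := key (-(u t + 1) / u' t)
      rw [← hM0'] at h1
      have e : u' t * (-(u t + 1) / u' t) = -(u t + 1) := by field_simp
      rw [e] at h1
      linarith
    rw [hu'0, ← hM0']
    norm_num
  · have h1 := key (-(u' t) / M)
    have e : u t + u' t * (-u' t / M) + M * (-u' t / M) ^ 2 / 2
        = u t - u' t ^ 2 / (2 * M) := by
      field_simp
      ring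
    rw [e, sub_nonneg, div_le_iff₀ (by positivity)] at h1
    linarith
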